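/- Let E be a real inner product space and Q ⊆ E convex. Let g : E → ℝ be convex and differentiable with L-Lipschitz gradient on Q, let h : E → ℝ be convex, and set f = g + h. Suppose g̃ : E → E satisfies ‖g̃(x) − ∇g(x)‖ ≤ Δ for all x ∈ Q, and that g(y) ≥ g(x) + ⟨g̃(x), y − x⟩ − γ‖y − x‖ − δ for all x, y ∈ Q, where Δ, γ, δ ≥ 0. Define ψ(y, x) = ⟨g̃(x), y − x⟩ + h(y) − h(x). Then for all x, y ∈ Q: f(x) + ψ(y, x) − γ‖y − x‖ − δ ≤ f(y) ≤ f(x) + ψ(y, x) + Δ‖y − x‖ + (L/2)‖y − x‖². In particular, ψ is a (δ, γ, Δ, L)-model of the composite function f with Bregman divergence V(y, x) = (1/2)‖y − x‖². -/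

import Mathlib

open scoped RealInnerProductSpace

lemma descent_aux
    {E : Type*} [NormedAddCommGroup E] [InnerProductSpace ℝ E] [CompleteSpace E]
    (Q : Set E) (hQ : Convex ℝ Q)
    (g : E → ℝ) (g' : E → E)
    (hgdiff : ∀ x, HasGradientAt g (g' x) x)
    (L : ℝ)
    (hLip : ∀ x ∈ Q, ∀ y ∈ Q, ‖g' x - g' y‖ ≤ L * ‖x - y‖)
    {x y : E} (hx : x ∈ Q) (hy : y ∈ Q) :
    g y ≤ g x + ⟪g' x, y - x⟫ + L / 2 * ‖y - x‖ ^ 2 := by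
  set v := y - x with hv
  set F : ℝ → ℝ := fun t => g (x + t • v) - t * ⟪g' x, v⟫ - L / 2 * t ^ 2 * ‖v‖ ^ 2 with hF
  have hderiv : ∀ t : ℝ, HasDerivAt F
      (⟪g' (x + t • v), v⟫ - ⟪g' x, v⟫ - L * t * ‖v‖ ^ 2) t := by
    intro t
    have h1 : HasDerivAt (fun t : ℝ => x + t • v) v t := by
      simpa using ((hasDerivAt_id t).smul_const v).const_add x
    have h2 := (hgdiff (x + t • v)).hasFDerivAt.comp_hasDerivAt t h1
    simp only [InnerProductSpace.toDual_apply_apply] at h2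
    have h3 : HasDerivAt (fun t : ℝ => t * ⟪g' x, v⟫) ⟪g' x, v⟫ t := by
      simpa using (hasDerivAt_id t).mul_const (⟪g' x, v⟫ : ℝ)
    have h4 : HasDerivAt (fun t : ℝ => L / 2 * t ^ 2 * ‖v‖ ^ 2)
        (L * t * ‖v‖ ^ 2) t := by
      have := ((hasDerivAt_pow 2 t).const_mul (L / 2)).mul_const (‖v‖ ^ 2)
      refine this.congr_deriv ?_
      ring
    exact (h2.sub h3).sub h4
  have hmem : ∀ t ∈ Set.Icc (0 : ℝ) 1, x + t • v ∈ Q := fun t ht =>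
    hQ.add_smul_sub_mem hx hy ht
  have hanti : AntitoneOn F (Set.Icc (0 : ℝ) 1) := by
    apply antitoneOn_of_deriv_nonpos (convex_Icc 0 1)
    · exact Continuous.continuousOn (by
        exact continuous_iff_continuousAt.2 fun t => (hderiv t).continuousAt)
    · exact fun t _ => (hderiv t).differentiableAt.differentiableWithinAt
    · intro t ht
      rw [interior_Icc] at ht
      rw [(hderiv t).deriv]
      have ht0 : (0 : ℝ) ≤ t := le_of_lt ht.1
      have ht1 : t ≤ 1 := le_of_lt ht.2
      have hpmem : x + t • v ∈ Q := hmem t ⟨ht0, ht1⟩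
      have hin : ⟪g' (x + t • v), v⟫ - ⟪g' x, v⟫ = ⟪g' (x + t • v) - g' x, v⟫ := by
        rw [inner_sub_left]
      rw [hin]
      have hcs : ⟪g' (x + t • v) - g' x, v⟫ ≤ ‖g' (x + t • v) - g' x‖ * ‖v‖ :=
        real_inner_le_norm _ _
      have hlip := hLip _ hpmem _ hx
      have hnorm : ‖x + t • v - x‖ = t * ‖v‖ := by
        simp [norm_smul, abs_of_nonneg ht0]
      have key : ⟪g' (x + t • v) - g' x, v⟫ ≤ L * t * ‖v‖ ^ 2 :=
        calc ⟪g' (x + t • v) - g' x, v⟫ ≤ ‖g' (x + t • v) - g' x‖ * ‖v‖ := hcs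
          _ ≤ L * (t * ‖v‖) * ‖v‖ := by
              rw [← hnorm]; exact mul_le_mul_of_nonneg_right hlip (norm_nonneg _)
          _ = L * t * ‖v‖ ^ 2 := by ring
      linarith
  have h01 := hanti (Set.left_mem_Icc.2 zero_le_one) (Set.right_mem_Icc.2 zero_le_one)
      zero_le_one
  have hF0 : F 0 = g x := by simp [hF]
  have hF1 : F 1 = g y - ⟪g' x, v⟫ - L / 2 * ‖v‖ ^ 2 := by
    simp [hF, hv]
  rw [hF0, hF1] at h01
  linarith

/-- For a composite function `f = g + h` with `g` smooth (inexact gradient `gA`,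
accuracy `Δ`, lower bound with parameters `γ, δ`) and `h` convex, the function
`ψ(y, x) = ⟪gA x, y − x⟫ + h y − h x` is a `(δ, γ, Δ, L)`-model of `f`. -/
theorem composite_model
    {E : Type*} [NormedAddCommGroup E] [InnerProductSpace ℝ E] [CompleteSpace E]
    (Q : Set E) (hQ : Convex ℝ Q)
    (g : E → ℝ) (g' : E → E)
    (hgdiff : ∀ x, HasGradientAt g (g' x) x)
    (hgconv : ConvexOn ℝ Q g)
    (h : E → ℝ) (hhconv : ConvexOn ℝ Q h)
    (L Δ γ δ : ℝ) (hL : 0 ≤ L) (hΔ : 0 ≤ Δ) (hγ : 0 ≤ γ) (hδ : 0 ≤ δ)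
    (hLip : ∀ x ∈ Q, ∀ y ∈ Q, ‖g' x - g' y‖ ≤ L * ‖x - y‖)
    (gA : E → E) (hgA : ∀ x ∈ Q, ‖gA x - g' x‖ ≤ Δ)
    (hlower : ∀ x ∈ Q, ∀ y ∈ Q, g y ≥ g x + ⟪gA x, y - x⟫ - γ * ‖y - x‖ - δ)
    (f : E → ℝ) (hf : ∀ x, f x = g x + h x)
    (ψ : E → E → ℝ) (hψ : ∀ x y, ψ y x = ⟪gA x, y - x⟫ + h y - h x) :
    ∀ x ∈ Q, ∀ y ∈ Q,
      f x + ψ y x - γ * ‖y - x‖ - δ ≤ f y ∧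
      f y ≤ f x + ψ y x + Δ * ‖y - x‖ + L / 2 * ‖y - x‖ ^ 2 := by
  intro x hx y hy
  constructor
  · have := hlower x hx y hy
    rw [hf x, hf y, hψ x y]
    linarith
  · have hdesc := descent_aux Q hQ g g' hgdiff L hLip hx hy
    have hsplit : ⟪g' x, y - x⟫ = ⟪gA x, y - x⟫ + ⟪g' x - gA x, y - x⟫ := by
      rw [inner_sub_left]; ring
    have hcs : ⟪g' x - gA x, y - x⟫ ≤ ‖g' x - gA x‖ * ‖y - x‖ := real_inner_le_norm _ _
    have hbnd : ‖g' x - gA x‖ ≤ Δ := by rw [norm_sub_rev]; exact hgA x hx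
    have : ⟪g' x - gA x, y - x⟫ ≤ Δ * ‖y - x‖ :=
      hcs.trans (mul_le_mul_of_nonneg_right hbnd (norm_nonneg _))
    rw [hf x, hf y, hψ x y]
    linarith
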